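/- Let μ be a singular cardinal with cf(μ) = κ < μ and let λ be a cardinal with μ < λ. Suppose that 𝒮 is a nice system for μ (with data (μ_i : i < κ), (λ_i : i < κ), filters 𝒟_i, quasi orders W_i and functions g_i), that 𝒟 is a uniform ultrafilter over κ, and that f̄ = (f_α : α < λ) is a sullam in (∏_{i<κ} W_i, 𝒟). Define 𝒰 = {A ⊆ μ : there exist α < λ and x ∈ 𝒟 such that g_i(f_α(i)) ⊆_{𝒟_i} (A ∩ λ_i) for every i ∈ x}. Then 𝒰 is a uniform ultrafilter over μ, i.e. 𝒰 is a filter on μ, for every A ⊆ μ either A ∈ 𝒰 or μ ∖ A ∈ 𝒰, and every element of 𝒰 has cardinality μ. -/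

import Mathlib

open Cardinal Set

noncomputable section

namespace Stmt1

/-- The rank-initial segment of `o.ToType` consisting of the points of rank `< c.ord`;
it plays the role of the cardinal `c` as a subset of the underlying set of `o`. -/
def seg (o : Ordinal) (c : Cardinal) : Set o.ToType :=
  {x | ((Ordinal.ToType.mk (o := o)).symm x).1 < c.ord}

/-- A (uniform) filter over the field `X`, of uniformity `θ`: a collection of subsets
of `X` containing `X`, closed under intersections and supersets (inside `X`), all of
whose members have cardinality `θ`, and containing the complement (in `X`) of every
subset of `X` of cardinality `< θ`. -/
def IsNiceFilter {α : Type} (X : Set α) (θ : Cardinal) (F : Set (Set α)) : Prop :=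
  (∀ A ∈ F, A ⊆ X) ∧ X ∈ F ∧
  (∀ A ∈ F, ∀ B ∈ F, A ∩ B ∈ F) ∧
  (∀ A ∈ F, ∀ B, A ⊆ B → B ⊆ X → B ∈ F) ∧
  (∀ A ∈ F, #A = θ) ∧
  (∀ u : Set α, u ⊆ X → #u < θ → X \ u ∈ F)

/-- `A ⊆_F B`: `A ∖ B` belongs to the ideal dual to the filter `F` over the field `X`. -/
def subFilter {α : Type} (X : Set α) (F : Set (Set α)) (A B : Set α) : Prop :=
  X \ (A \ B) ∈ F

/-- The `F`-positive subsets of the field `X`: those subsets of `X` not in the dual ideal. -/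
def posSets {α : Type} (X : Set α) (F : Set (Set α)) : Set (Set α) :=
  {A | A ⊆ X ∧ X \ A ∉ F}

/-- A nice system for a singular cardinal `μ` of cofinality `κ` (Definition 1.3 of the
paper): increasing sequences of cardinals `μ_i` with supremum `μ` and of regular
cardinals `λ_i` with `μ_i ≤ λ_i < μ_{i+1}` (equivalently, `λ_i < μ_j` for `i < j`),
uniform filters `𝒟_i` over `λ_i`, quasi orders `(W_i, R_i)`, and maps
`g_i : W_i → 𝒟_i⁺` which are `⊆_{𝒟_i}`-decreasing and have the decidability property. -/
structure NiceSystem (mu κ : Cardinal) where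
  muSeq : κ.ord.ToType → Cardinal
  lamSeq : κ.ord.ToType → Cardinal
  D : κ.ord.ToType → Set (Set mu.ord.ToType)
  W : κ.ord.ToType → Type
  R : ∀ i, W i → W i → Prop
  g : ∀ i, W i → Set mu.ord.ToType
  muSeq_mono : StrictMono muSeq
  mu_sup : mu = ⨆ i, muSeq i
  lamSeq_mono : StrictMono lamSeq
  lamSeq_reg : ∀ i, (lamSeq i).IsRegular
  muSeq_le_lamSeq : ∀ i, muSeq i ≤ lamSeq i
  lamSeq_lt_next : ∀ i j, i < j → lamSeq i < muSeq j
  D_filter : ∀ i, IsNiceFilter (seg mu.ord (lamSeq i)) (lamSeq i) (D i)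
  R_refl : ∀ i w, R i w w
  R_trans : ∀ i a b c, R i a b → R i b c → R i a c
  g_pos : ∀ i w, g i w ∈ posSets (seg mu.ord (lamSeq i)) (D i)
  g_dec : ∀ i s t, R i s t →
    subFilter (seg mu.ord (lamSeq i)) (D i) (g i t) (g i s)
  g_decide : ∀ i (s : W i) (A : Set mu.ord.ToType), A ⊆ seg mu.ord (lamSeq i) →
    ∃ t, R i s t ∧
      (subFilter (seg mu.ord (lamSeq i)) (D i) (g i t) A ∨
       subFilter (seg mu.ord (lamSeq i)) (D i) (g i t) (seg mu.ord (lamSeq i) \ A))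

/-- `f̄ = (f_α : α < λ)` is a sullam in `(∏_{i<κ} W_i, 𝒟)`: it is `𝒟`-increasing, and for
every choice of dense subsets `V_i ⊆ W_i` some `f_α` lies in `V_i` for `𝒟`-almost all `i`. -/
def IsSullam {mu κ : Cardinal} (lam : Cardinal) (S : NiceSystem mu κ)
    (𝒟 : Ultrafilter κ.ord.ToType) (f : lam.ord.ToType → ∀ i, S.W i) : Prop :=
  (∀ a b : lam.ord.ToType, a < b → {i | S.R i (f a i) (f b i)} ∈ 𝒟) ∧
  (∀ V : ∀ i, Set (S.W i), (∀ i, ∀ x : S.W i, ∃ y ∈ V i, S.R i x y) →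
    ∃ a : lam.ord.ToType, {i | f a i ∈ V i} ∈ 𝒟)

/-- The family `𝒰` of subsets of `μ` defined from a nice system, an ultrafilter `𝒟`
over `κ` and a sullam `f̄`:  `A ∈ 𝒰` iff there are `α < λ` and `x ∈ 𝒟` such that
`g_i(f_α(i)) ⊆_{𝒟_i} A ∩ λ_i` for every `i ∈ x`. -/
def UF {mu κ : Cardinal} (lam : Cardinal) (S : NiceSystem mu κ)
    (𝒟 : Ultrafilter κ.ord.ToType) (f : lam.ord.ToType → ∀ i, S.W i) :
    Set (Set mu.ord.ToType) :=
  {A | ∃ a : lam.ord.ToType, ∃ x ∈ 𝒟, ∀ i ∈ x,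
    subFilter (seg mu.ord (S.lamSeq i)) (S.D i) (S.g i (f a i))
      (A ∩ seg mu.ord (S.lamSeq i))}

lemma nsf_mono {α : Type} {X : Set α} {θ : Cardinal} {F : Set (Set α)}
    (hF : IsNiceFilter X θ F) {A B C : Set α}
    (h1 : subFilter X F A B) (hBC : B ⊆ C) : subFilter X F A C := by
  refine hF.2.2.2.1 _ h1 _ (fun z hz => ⟨hz.1, fun h => hz.2 ⟨h.1, fun hb => h.2 (hBC hb)⟩⟩)
    (fun z hz => hz.1)

lemma nsf_trans {α : Type} {X : Set α} {θ : Cardinal} {F : Set (Set α)}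
    (hF : IsNiceFilter X θ F) {A B C : Set α}
    (h1 : subFilter X F A B) (h2 : subFilter X F B C) : subFilter X F A C := by
  have h3 := hF.2.2.1 _ h1 _ h2
  refine hF.2.2.2.1 _ h3 _ ?_ (fun z hz => hz.1)
  rintro z ⟨⟨hzX, hz1⟩, ⟨_, hz2⟩⟩
  refine ⟨hzX, fun h => ?_⟩
  by_cases hb : z ∈ B
  · exact hz2 ⟨hb, h.2⟩
  · exact hz1 ⟨h.1, hb⟩

lemma nsf_inter {α : Type} {X : Set α} {θ : Cardinal} {F : Set (Set α)}
    (hF : IsNiceFilter X θ F) {A B C : Set α}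
    (h1 : subFilter X F A B) (h2 : subFilter X F A C) :
    subFilter X F A (B ∩ C) := by
  have h3 := hF.2.2.1 _ h1 _ h2
  have he : (X \ (A \ B)) ∩ (X \ (A \ C)) = X \ (A \ (B ∩ C)) := by
    ext z
    simp only [Set.mem_inter_iff, Set.mem_diff]
    tauto
  show X \ (A \ (B ∩ C)) ∈ F
  exact he ▸ h3

lemma nsf_pos {α : Type} {X : Set α} {θ : Cardinal} {F : Set (Set α)}
    (hF : IsNiceFilter X θ F) {g A : Set α}
    (hg : g ∈ posSets X F) (h : subFilter X F g A) : θ ≤ #(g ∩ A : Set α) := by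
  by_contra hlt
  push_neg at hlt
  have hgX : g ⊆ X := hg.1
  have h1 : X \ (g ∩ A) ∈ F := hF.2.2.2.2.2 _ (fun z hz => hgX hz.1) hlt
  have h2 := hF.2.2.1 _ h1 _ h
  have he : (X \ (g ∩ A)) ∩ (X \ (g \ A)) = X \ g := by
    ext z
    simp only [Set.mem_inter_iff, Set.mem_diff, Set.mem_inter_iff]
    tauto
  exact hg.2 (he ▸ h2)

/-- Let `μ` be singular with `cf(μ) = κ < μ`, and `μ < λ`.  Given a nice system `𝒮` for
`μ`, a uniform ultrafilter `𝒟` over `κ` and a sullam `f̄ = (f_α : α < λ)` in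
`(∏_{i<κ} W_i, 𝒟)`, the family
`𝒰 = {A ⊆ μ : ∃ α < λ, ∃ x ∈ 𝒟, ∀ i ∈ x, g_i(f_α(i)) ⊆_{𝒟_i} A ∩ λ_i}`
is a uniform ultrafilter over `μ`: it is a filter on `μ`, for every `A ⊆ μ` either
`A ∈ 𝒰` or `μ ∖ A ∈ 𝒰`, and every member of `𝒰` has cardinality `μ`. -/
theorem stmt1 (mu κ lam : Cardinal)
    (hcof : mu.ord.cof = κ) (hsing : κ < mu) (hmulam : mu < lam)
    (S : NiceSystem mu κ)
    (𝒟 : Ultrafilter κ.ord.ToType)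
    (h𝒟unif : ∀ s ∈ 𝒟, #s = κ)
    (f : lam.ord.ToType → ∀ i, S.W i)
    (hf : IsSullam lam S 𝒟 f) :
    (Set.univ ∈ UF lam S 𝒟 f) ∧
    (∀ A ∈ UF lam S 𝒟 f, ∀ B ∈ UF lam S 𝒟 f, A ∩ B ∈ UF lam S 𝒟 f) ∧
    (∀ A ∈ UF lam S 𝒟 f, ∀ B : Set mu.ord.ToType, A ⊆ B → B ∈ UF lam S 𝒟 f) ∧
    (∀ A : Set mu.ord.ToType, A ∈ UF lam S 𝒟 f ∨ Aᶜ ∈ UF lam S 𝒟 f) ∧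
    (∀ A ∈ UF lam S 𝒟 f, #A = mu) := by
  -- basic facts
  have hκne : Nonempty κ.ord.ToType := by
    by_contra h
    have : mu = 0 := by
      rw [S.mu_sup]
      haveI : IsEmpty κ.ord.ToType := not_nonempty_iff.mp h
      exact ciSup_of_empty _
    exact (this ▸ hsing).not_ge (zero_le (a := κ))
  have hseg_card : ∀ i, #(seg mu.ord (S.lamSeq i)) = S.lamSeq i := fun i =>
    (S.D_filter i).2.2.2.2.1 _ (S.D_filter i).2.1
  have hlam_le_mu : ∀ i, S.lamSeq i ≤ mu := fun i => by
    rw [← hseg_card i]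
    calc #(seg mu.ord (S.lamSeq i)) ≤ #(mu.ord.ToType) := mk_set_le _
      _ = mu := by rw [Cardinal.mk_toType, Cardinal.card_ord]
  have hmu_inf : ℵ₀ ≤ mu :=
    ((S.lamSeq_reg (Classical.arbitrary _)).aleph0_le).trans
      (hlam_le_mu (Classical.arbitrary _))
  have hlamne : Nonempty lam.ord.ToType := by
    refine Ordinal.toType_nonempty_iff_ne_zero.mpr fun h0 => ?_
    have := congrArg Ordinal.card h0
    simp only [Cardinal.card_ord, Ordinal.card_zero] at this
    exact ((this ▸ hmulam).trans_le (zero_le (a := mu))).false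
  have hgX : ∀ i (w : S.W i), S.g i w ⊆ seg mu.ord (S.lamSeq i) := fun i w =>
    (S.g_pos i w).1
  refine ⟨?_, ?_, ?_, ?_, ?_⟩
  · -- univ ∈ 𝒰
    obtain ⟨a⟩ := hlamne
    refine ⟨a, Set.univ, Filter.univ_mem, fun i _ => ?_⟩
    have he : seg mu.ord (S.lamSeq i) \ (S.g i (f a i) \ (Set.univ ∩ seg mu.ord (S.lamSeq i)))
        = seg mu.ord (S.lamSeq i) := by
      ext z
      simp only [Set.univ_inter, Set.mem_diff, Set.mem_univ, and_iff_left_iff_imp]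
      exact fun hz h => (h.2 hz).elim
    show seg mu.ord (S.lamSeq i) \ (S.g i (f a i) \ (Set.univ ∩ seg mu.ord (S.lamSeq i))) ∈ S.D i
    rw [he]
    exact (S.D_filter i).2.1
  · -- closed under intersection
    rintro A ⟨a, x, hx, hxA⟩ B ⟨b, y, hy, hyB⟩
    have key : ∃ c : lam.ord.ToType, ∃ z ∈ 𝒟, ∀ i ∈ z,
        subFilter (seg mu.ord (S.lamSeq i)) (S.D i) (S.g i (f c i))
          (A ∩ seg mu.ord (S.lamSeq i)) ∧
        subFilter (seg mu.ord (S.lamSeq i)) (S.D i) (S.g i (f c i))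
          (B ∩ seg mu.ord (S.lamSeq i)) := by
      rcases lt_trichotomy a b with hab | hab | hab
      · refine ⟨b, x ∩ y ∩ {i | S.R i (f a i) (f b i)},
          Filter.inter_mem (Filter.inter_mem hx hy) (hf.1 a b hab), fun i hi => ?_⟩
        have hd := S.g_dec i (f a i) (f b i) hi.2
        exact ⟨nsf_trans (S.D_filter i) hd (hxA i hi.1.1), hyB i hi.1.2⟩
      · subst hab
        exact ⟨a, x ∩ y, Filter.inter_mem hx hy, fun i hi => ⟨hxA i hi.1, hyB i hi.2⟩⟩
      · refine ⟨a, x ∩ y ∩ {i | S.R i (f b i) (f a i)},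
          Filter.inter_mem (Filter.inter_mem hx hy) (hf.1 b a hab), fun i hi => ?_⟩
        have hd := S.g_dec i (f b i) (f a i) hi.2
        exact ⟨hxA i hi.1.1, nsf_trans (S.D_filter i) hd (hyB i hi.1.2)⟩
    obtain ⟨c, z, hz, hc⟩ := key
    refine ⟨c, z, hz, fun i hi => ?_⟩
    have := nsf_inter (S.D_filter i) (hc i hi).1 (hc i hi).2
    have he : (A ∩ seg mu.ord (S.lamSeq i)) ∩ (B ∩ seg mu.ord (S.lamSeq i))
        = (A ∩ B) ∩ seg mu.ord (S.lamSeq i) := by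
      ext z; simp only [Set.mem_inter_iff]; tauto
    show seg mu.ord (S.lamSeq i) \ (S.g i (f c i) \ (A ∩ B ∩ seg mu.ord (S.lamSeq i))) ∈ S.D i
    rw [← he]
    exact this
  · -- upward closed
    rintro A ⟨a, x, hx, hA⟩ B hAB
    exact ⟨a, x, hx, fun i hi =>
      nsf_mono (S.D_filter i) (hA i hi) (Set.inter_subset_inter_left _ hAB)⟩
  · -- ultrafilter property
    intro A
    set V : ∀ i, Set (S.W i) := fun i =>
      {t | subFilter (seg mu.ord (S.lamSeq i)) (S.D i) (S.g i t)
            (A ∩ seg mu.ord (S.lamSeq i)) ∨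
           subFilter (seg mu.ord (S.lamSeq i)) (S.D i) (S.g i t)
            (seg mu.ord (S.lamSeq i) \ (A ∩ seg mu.ord (S.lamSeq i)))} with hV
    have hdense : ∀ i, ∀ s : S.W i, ∃ t ∈ V i, S.R i s t := by
      intro i s
      obtain ⟨t, hst, ht⟩ := S.g_decide i s (A ∩ seg mu.ord (S.lamSeq i))
        Set.inter_subset_right
      exact ⟨t, ht, hst⟩
    obtain ⟨a, ha⟩ := hf.2 V hdense
    have hsplit : {i | f a i ∈ V i} =
        {i | subFilter (seg mu.ord (S.lamSeq i)) (S.D i) (S.g i (f a i))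
              (A ∩ seg mu.ord (S.lamSeq i))} ∪
        {i | subFilter (seg mu.ord (S.lamSeq i)) (S.D i) (S.g i (f a i))
              (seg mu.ord (S.lamSeq i) \ (A ∩ seg mu.ord (S.lamSeq i)))} := by
      ext i; simp only [hV, Set.mem_setOf_eq, Set.mem_union]
    rw [hsplit, Ultrafilter.union_mem_iff] at ha
    rcases ha with ha | ha
    · exact Or.inl ⟨a, _, ha, fun i hi => hi⟩
    · refine Or.inr ⟨a, _, ha, fun i hi => ?_⟩
      have he : seg mu.ord (S.lamSeq i) \ (A ∩ seg mu.ord (S.lamSeq i))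
          = Aᶜ ∩ seg mu.ord (S.lamSeq i) := by
        ext z
        simp only [Set.mem_diff, Set.mem_inter_iff, Set.mem_compl_iff]
        tauto
      show seg mu.ord (S.lamSeq i) \ (S.g i (f a i) \ (Aᶜ ∩ seg mu.ord (S.lamSeq i))) ∈ S.D i
      rw [← he]
      exact hi
  · -- uniformity
    rintro A ⟨a, x, hx, hA⟩
    have hub : #A ≤ mu := by
      calc #A ≤ #(mu.ord.ToType) := mk_set_le A
        _ = mu := by rw [Cardinal.mk_toType, Cardinal.card_ord]
    refine le_antisymm hub ?_
    have hj : ∀ j, S.muSeq j ≤ #A := by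
      intro j
      have hcof' : ∃ i ∈ x, j ≤ i := by
        by_contra h
        push_neg at h
        have hsub : x ⊆ Set.Iio j := fun i hi => h i hi
        have hle : #x ≤ #(Set.Iio j) := mk_le_mk_of_subset hsub
        rw [h𝒟unif x hx] at hle
        exact (hle.trans_lt (Cardinal.mk_Iio_ord_toType j)).false
      obtain ⟨i, hix, hji⟩ := hcof'
      have h1 : S.lamSeq i ≤
          #(S.g i (f a i) ∩ (A ∩ seg mu.ord (S.lamSeq i)) : Set mu.ord.ToType) :=
        nsf_pos (S.D_filter i) (S.g_pos i _) (hA i hix)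
      calc S.muSeq j ≤ S.muSeq i := S.muSeq_mono.monotone hji
        _ ≤ S.lamSeq i := S.muSeq_le_lamSeq i
        _ ≤ _ := h1
        _ ≤ #A := mk_le_mk_of_subset (fun z hz => hz.2.1)
    calc mu = ⨆ i, S.muSeq i := S.mu_sup
      _ ≤ #A := ciSup_le' hj

end Stmt1
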